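/- Let p, λ', τ, T > 0 and define E[n_s] = e^{-λ'τ}(1-p)[1-e^{-λ'T}(1-p)]/T. If the count variables n[k] (k = 0,…,1/T − 1) are Bernoulli with this mean·T as success probability, satisfy n[k]n[l] = 0 for |k-l| = 1, and are independent for |k-l| ≥ 2, then D[n_s] = E[n_s] + (2T² - 3T)E[n_s]². -/

import Mathlib

open MeasureTheory ProbabilityTheory

lemma habs_iff (a b : ℕ) : |(a : ℤ) - (b : ℤ)| = 1 ↔ (b = a + 1 ∨ a = b + 1) := by
  rw [abs_eq (by norm_num : (0:ℤ) ≤ 1)]; omega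

lemma adj_count (N : ℕ) (hN : 0 < N) :
    (∑ k ∈ Finset.range N, ∑ l ∈ Finset.range N,
      (if |(k : ℤ) - (l : ℤ)| = 1 then (1:ℝ) else 0)) = 2 * (N - 1) := by
  have hsplit : ∀ a b : ℕ, (if |(a : ℤ) - (b : ℤ)| = 1 then (1:ℝ) else 0)
      = (if b = a + 1 then (1:ℝ) else 0) + (if a = b + 1 then (1:ℝ) else 0) := by
    intro a b
    by_cases h1 : b = a + 1 <;> by_cases h2 : a = b + 1
    · exfalso; omega
    · have hc : |(a : ℤ) - (b : ℤ)| = 1 := (habs_iff a b).mpr (Or.inl h1)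
      simp [hc, h1, h2]
      omega
    · have hc : |(a : ℤ) - (b : ℤ)| = 1 := (habs_iff a b).mpr (Or.inr h2)
      simp [hc, h1, h2]
      omega
    · have hc : ¬ |(a : ℤ) - (b : ℤ)| = 1 := fun h => by
        rcases (habs_iff a b).mp h with h | h
        exacts [h1 h, h2 h]
      simp [hc, h1, h2]
  simp_rw [hsplit, Finset.sum_add_distrib]
  have hinner1 : ∀ k ∈ Finset.range N,
      (∑ l ∈ Finset.range N, (if l = k + 1 then (1:ℝ) else 0))
        = (if k + 1 < N then (1:ℝ) else 0) := by
    intro k hk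
    rw [Finset.sum_ite_eq' (Finset.range N) (k+1) (fun _ => (1:ℝ))]
    simp [Finset.mem_range]
  have hinner2 : ∀ k ∈ Finset.range N,
      (∑ l ∈ Finset.range N, (if k = l + 1 then (1:ℝ) else 0))
        = (if 1 ≤ k then (1:ℝ) else 0) := by
    intro k hk
    rcases Nat.eq_zero_or_pos k with h0 | h1
    · subst h0
      rw [Finset.sum_eq_zero (fun l _ => if_neg (by omega))]
      simp
    · obtain ⟨m, rfl⟩ : ∃ m, k = m + 1 := ⟨k - 1, by omega⟩
      have hc : ∀ l, (m + 1 = l + 1) ↔ (l = m) := by omega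
      simp_rw [hc]
      rw [Finset.sum_ite_eq' (Finset.range N) m (fun _ => (1:ℝ))]
      have hm : m ∈ Finset.range N := Finset.mem_range.mpr
        (by have := Finset.mem_range.mp hk; omega)
      simp [hm]
  rw [Finset.sum_congr rfl hinner1, Finset.sum_congr rfl hinner2]
  have h1 : (∑ k ∈ Finset.range N, (if k + 1 < N then (1:ℝ) else 0)) = (N:ℝ) - 1 := by
    rw [Finset.sum_boole]
    have : (Finset.range N).filter (fun k => k + 1 < N) = Finset.range (N - 1) := by
      ext k; simp [Finset.mem_range]; omega
    rw [this, Finset.card_range, Nat.cast_sub hN]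
    simp
  have h2 : (∑ k ∈ Finset.range N, (if 1 ≤ k then (1:ℝ) else 0)) = (N:ℝ) - 1 := by
    rw [Finset.sum_boole]
    have : (Finset.range N).filter (fun k => 1 ≤ k) = Finset.Ico 1 N := by
      ext k; simp [Finset.mem_range, Finset.mem_Ico]; omega
    rw [this, Nat.card_Ico, Nat.cast_sub hN]
    simp
  rw [h1, h2]; ring

/-- Shot and thermal noise, case `T > τ`: variance of the recorded pulse count. -/
theorem stmt6 {Ω : Type*} [MeasureSpace Ω]
    [IsProbabilityMeasure (volume : Measure Ω)]
    (N : ℕ) (hN : 0 < N) (T lam' τ p : ℝ) (hT : T = 1 / N)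
    (hlam : 0 < lam') (hτ : 0 < τ) (hp0 : 0 < p)
    (n : Fin N → Ω → ℝ) (hmeas : ∀ k, Measurable (n k))
    (hval : ∀ k, ∀ᵐ ω ∂(volume : Measure Ω), n k ω = 0 ∨ n k ω = 1)
    (hprob : ∀ k, volume {ω | n k ω = 1}
        = ENNReal.ofReal (Real.exp (-lam'*τ) * (1-p) * (1 - Real.exp (-lam'*T) * (1-p))))
    (hadj : ∀ k l : Fin N, |(k : ℤ) - (l : ℤ)| = 1 →
        ∀ᵐ ω ∂(volume : Measure Ω), n k ω * n l ω = 0)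
    (hind : ∀ k l : Fin N, 2 ≤ |(k : ℤ) - (l : ℤ)| → IndepFun (n k) (n l)) :
    (∫ ω, (∑ k, n k ω)^2) - (∫ ω, (∑ k, n k ω))^2
      = (∫ ω, (∑ k, n k ω)) + (2*T^2 - 3*T) * (∫ ω, (∑ k, n k ω))^2 := by
  set r : ℝ := (ENNReal.ofReal (Real.exp (-lam'*τ) * (1-p) *
    (1 - Real.exp (-lam'*T) * (1-p)))).toReal with hr
  -- integrability
  have hint : ∀ k, Integrable (n k) := by
    intro k
    refine Integrable.mono' (integrable_const 1) (hmeas k).aestronglyMeasurable ?_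
    filter_upwards [hval k] with ω h
    rcases h with h | h <;> simp [h]
  have hintmul : ∀ k l, Integrable (fun ω => n k ω * n l ω) := by
    intro k l
    refine Integrable.mono' (integrable_const 1) ((hmeas k).mul (hmeas l)).aestronglyMeasurable ?_
    filter_upwards [hval k, hval l] with ω h h'
    rcases h with h | h <;> rcases h' with h' | h' <;> simp [h, h']
  -- each mean is r
  have hE : ∀ k, (∫ ω, n k ω) = r := by
    intro k
    have hs : MeasurableSet {ω | n k ω = 1} := hmeas k (measurableSet_singleton 1)
    have hae : (fun ω => n k ω)
        =ᵐ[volume] Set.indicator {ω | n k ω = 1} (fun _ => (1:ℝ)) := by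
      filter_upwards [hval k] with ω h
      rcases h with h | h <;> simp [Set.indicator_apply, Set.mem_setOf_eq, h]
    rw [integral_congr_ae hae, integral_indicator_const (1:ℝ) hs, measureReal_def, hprob k, hr]
    simp
  -- products
  have hEsq : ∀ k, (∫ ω, n k ω * n k ω) = r := by
    intro k
    have hae : (fun ω => n k ω * n k ω) =ᵐ[volume] fun ω => n k ω := by
      filter_upwards [hval k] with ω h
      rcases h with h | h <;> simp [h]
    rw [integral_congr_ae hae, hE k]
  have hprod : ∀ k l : Fin N, (∫ ω, n k ω * n l ω)
      = if k = l then r else if |(k : ℤ) - (l : ℤ)| = 1 then 0 else r * r := by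
    intro k l
    by_cases hkl : k = l
    · subst hkl; simp [hEsq k]
    · simp only [if_neg hkl]
      by_cases h1 : |(k : ℤ) - (l : ℤ)| = 1
      · rw [if_pos h1, integral_eq_zero_of_ae (hadj k l h1)]
      · rw [if_neg h1]
        have hne : k.val ≠ l.val := fun h => hkl (Fin.ext h)
        have h2 : 2 ≤ |(k : ℤ) - (l : ℤ)| := by
          rcases abs_cases ((k : ℤ) - (l : ℤ)) with ⟨he, _⟩ | ⟨he, _⟩ <;> omega
        have := (hind k l h2).integral_mul_eq_mul_integral (hint k).1 (hint l).1
        rw [show (fun ω => n k ω * n l ω) = n k * n l from rfl, this, hE k, hE l]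
  -- mean of the sum
  have hES : (∫ ω, (∑ k, n k ω)) = N * r := by
    rw [integral_finset_sum _ (fun k _ => hint k)]
    simp [hE, Finset.card_univ, mul_comm]
  -- second moment
  have hES2 : (∫ ω, (∑ k, n k ω)^2) = N * r + ((N:ℝ)^2 - 3*N + 2) * (r * r) := by
    have hexp : ∀ ω, (∑ k, n k ω)^2 = ∑ k, ∑ l, n k ω * n l ω := by
      intro ω; rw [sq, Finset.sum_mul_sum]
    simp_rw [hexp]
    rw [integral_finset_sum _ (fun k _ => integrable_finset_sum _ (fun l _ => hintmul k l))]
    have hswap : ∀ k : Fin N, (∫ ω, ∑ l, n k ω * n l ω) = ∑ l, ∫ ω, n k ω * n l ω := by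
      intro k; rw [integral_finset_sum _ (fun l _ => hintmul k l)]
    simp_rw [hswap, hprod]
    have hsplit : ∀ k l : Fin N,
        (if k = l then r else if |(k : ℤ) - (l : ℤ)| = 1 then 0 else r * r)
        = r * r + (if k = l then r - r * r else 0)
            - (if |(k : ℤ) - (l : ℤ)| = 1 then r * r else 0) := by
      intro k l
      by_cases hkl : k = l
      · subst hkl
        simp
      · have hne : k.val ≠ l.val := fun h => hkl (Fin.ext h)
        by_cases h1 : |(k : ℤ) - (l : ℤ)| = 1 <;> simp [hkl, h1]
    simp_rw [hsplit]
    simp only [Finset.sum_sub_distrib, Finset.sum_add_distrib, Finset.sum_const,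
      Finset.card_univ, Fintype.card_fin, Finset.sum_ite_eq, Finset.mem_univ, if_true]
    have hadjsum : (∑ k : Fin N, ∑ l : Fin N,
        (if |(k : ℤ) - (l : ℤ)| = 1 then r * r else 0)) = 2 * ((N:ℝ) - 1) * (r * r) := by
      have hfac : ∀ k l : Fin N, (if |(k : ℤ) - (l : ℤ)| = 1 then r * r else 0)
          = (if |(k : ℤ) - (l : ℤ)| = 1 then (1:ℝ) else 0) * (r * r) := by
        intro k l; by_cases h : |(k : ℤ) - (l : ℤ)| = 1 <;> simp [h]
      simp_rw [hfac, ← Finset.sum_mul]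
      have conv1 : ∀ k : Fin N,
          (∑ l : Fin N, (if |(k : ℤ) - (l : ℤ)| = 1 then (1:ℝ) else 0))
          = ∑ l ∈ Finset.range N, (if |(k : ℤ) - (l : ℤ)| = 1 then (1:ℝ) else 0) :=
        fun k => Fin.sum_univ_eq_sum_range
          (fun l : ℕ => if |((k.val : ℤ)) - (l : ℤ)| = 1 then (1:ℝ) else 0) N
      simp_rw [conv1]
      rw [Fin.sum_univ_eq_sum_range
        (fun k : ℕ => ∑ l ∈ Finset.range N, (if |(k : ℤ) - (l : ℤ)| = 1 then (1:ℝ) else 0)) N]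
      rw [adj_count N hN]
    rw [hadjsum]
    ring
  rw [hES, hES2, hT]
  have hNpos : (0:ℝ) < N := by exact_mod_cast hN
  field_simp
  ring
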